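/- Let T be a finite tree with a planar embedding and ordered vertices as above. If c is a critical cell of UD^n(T) and [c'] ≤ [c] in the face-induced partial order on equivalence classes, then c' is equivalent to some critical cell. -/

import Mathlib

attribute [local instance] Classical.propDecidable

/-- `u` is a descendant of `v` in the rooted tree with parent function `p`. -/
def Desc {m : ℕ} (p : Fin (m + 1) → Fin (m + 1)) (u v : Fin (m + 1)) : Prop :=
  ∃ k : ℕ, p^[k] u = v

/-- A finite tree, rooted at the degree-one vertex `0`, whose vertices `Fin (m + 1)` are ordered
by first encounter in a depth-first traversal induced by a planar embedding: each
non-root vertex `v` has a parent `p v < v`, the root is fixed, the set of descendants of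
any vertex is an interval (the characteristic property of depth-first orders), and the
root has degree one (its only child is the vertex `1`). -/
structure OrderedTree (m : ℕ) where
  /-- the parent function; the edges of the tree are the pairs `(v, p v)`, `v ≠ 0` -/
  p : Fin (m + 1) → Fin (m + 1)
  root_fix : p 0 = 0
  parent_lt : ∀ v : Fin (m + 1), v ≠ 0 → p v < v
  dfs_interval : ∀ v u w : Fin (m + 1), Desc p u v → v ≤ w → w ≤ u → Desc p w v
  root_deg_one : ∀ v : Fin (m + 1), v ≠ 0 → p v = 0 → v = 1

/-- A cell of the discretized unordered configuration space `UD^n(T)` of the tree `T`: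
`n` closed cells (edges and vertices) with pairwise disjoint closures.  An edge is
recorded by its larger endpoint `e` (so the edge is `[p e, e]`, with initial vertex
`ι(e) = e` and terminal vertex `τ(e) = p e`). -/
structure TCell (m n : ℕ) (T : OrderedTree m) where
  /-- the edges of the cell, each recorded by its child (= larger) endpoint -/
  edges : Finset (Fin (m + 1))
  /-- the vertices of the cell -/
  verts : Finset (Fin (m + 1))
  edges_ne_root : ∀ e ∈ edges, e ≠ 0
  card_eq : edges.card + verts.card = n
  vert_not_on_edge : ∀ e ∈ edges, ∀ v ∈ verts, v ≠ e ∧ v ≠ T.p e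
  edges_disjoint : ∀ e ∈ edges, ∀ e' ∈ edges, e ≠ e' → e ≠ T.p e' ∧ T.p e ≠ T.p e'

/-- A vertex `v` of the cell `c` is blocked if `v` is the root, or if the edge of `T`
whose initial (larger) endpoint is `v` meets another member of `c`, i.e. the parent of
`v` is a vertex of `c` or lies on an edge of `c`. -/
def Blocked {m n : ℕ} {T : OrderedTree m} (c : TCell m n T) (v : Fin (m + 1)) : Prop :=
  v = 0 ∨ T.p v ∈ c.verts ∨ T.p v ∈ c.edges ∨ ∃ e ∈ c.edges, T.p e = T.p v

/-- An edge `e` of the cell `c` is disrespectful if some vertex `v` of `c` adjacent to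
`τ(e) = p e` satisfies `τ(e) < v < ι(e) = e`; otherwise it is respectful. -/
def Disrespectful {m n : ℕ} {T : OrderedTree m} (c : TCell m n T) (e : Fin (m + 1)) : Prop :=
  ∃ v ∈ c.verts, T.p v = T.p e ∧ T.p e < v ∧ v < e

/-- A cell is critical (for the Morse matching `W`) if it has no unblocked vertices and
no respectful edges. -/
def Critical {m n : ℕ} {T : OrderedTree m} (c : TCell m n T) : Prop :=
  (∀ v ∈ c.verts, Blocked c v) ∧ (∀ e ∈ c.edges, Disrespectful c e)

/-- A cell is redundant (in the domain of the Morse matching `W`) if it has an unblocked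
vertex which occurs, in the order, before all of the respectful edges of the cell. -/
def Redundant {m n : ℕ} {T : OrderedTree m} (c : TCell m n T) : Prop :=
  ∃ v ∈ c.verts, ¬ Blocked c v ∧ ∀ e ∈ c.edges, ¬ Disrespectful c e → v < e

/-- `v` lies on (the closure of) one of the edges in `E`. -/
def OnEdges {m : ℕ} (T : OrderedTree m) (E : Finset (Fin (m + 1))) (v : Fin (m + 1)) : Prop :=
  ∃ e ∈ E, v = e ∨ v = T.p e

/-- Two vertices lie in the same connected component of `T` minus the closed edges
recorded in `E`. -/
def ReachOff {m : ℕ} (T : OrderedTree m) (E : Finset (Fin (m + 1))) (u w : Fin (m + 1)) : Prop :=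
  Relation.ReflTransGen
    (fun a b => ¬ OnEdges T E a ∧ ¬ OnEdges T E b ∧
      ((a ≠ 0 ∧ b = T.p a) ∨ (b ≠ 0 ∧ a = T.p b))) u w

/-- Two cells are equivalent if they have the same edge set and equal numbers of vertices
in each connected component of `T` minus the edges. -/
def TCellEquiv {m n : ℕ} {T : OrderedTree m} (c c' : TCell m n T) : Prop :=
  c.edges = c'.edges ∧ ∀ w : Fin (m + 1),
    (c.verts.filter fun v => ReachOff T c.edges v w).card =
    (c'.verts.filter fun v => ReachOff T c'.edges v w).card

/-- `c'` is a face of `c`: it is obtained by replacing some edges of `c` by one of their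
endpoints. -/
def TIsFace {m n : ℕ} {T : OrderedTree m} (c' c : TCell m n T) : Prop :=
  c'.edges ⊆ c.edges ∧ c.verts ⊆ c'.verts ∧
    ∀ v ∈ c'.verts, v ∉ c.verts → ∃ e ∈ c.edges, e ∉ c'.edges ∧ (v = e ∨ v = T.p e)

/-- The face-induced partial order on equivalence classes of cells. -/
def TClassLe {m n : ℕ} {T : OrderedTree m} (c c₁ : TCell m n T) : Prop :=
  ∃ d d₁ : TCell m n T, TCellEquiv d c ∧ TCellEquiv d₁ c₁ ∧ TIsFace d d₁

section Aux

variable {m n : ℕ} {T : OrderedTree m}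

lemma p_le_self (T : OrderedTree m) (a : Fin (m + 1)) : T.p a ≤ a := by
  by_cases h : a = 0
  · subst h; rw [T.root_fix]
  · exact (T.parent_lt a h).le

lemma iter_p_le (T : OrderedTree m) (k : ℕ) (a : Fin (m + 1)) : T.p^[k] a ≤ a := by
  induction k generalizing a with
  | zero => simp
  | succ k ih =>
      rw [Function.iterate_succ_apply]
      exact (ih (T.p a)).trans (p_le_self T a)

lemma desc_le {a b : Fin (m + 1)} (h : Desc T.p a b) : b ≤ a := by
  obtain ⟨k, hk⟩ := h
  rw [← hk]; exact iter_p_le T k a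

lemma iter_p_root (T : OrderedTree m) (k : ℕ) : T.p^[k] (0 : Fin (m + 1)) = 0 := by
  induction k with
  | zero => rfl
  | succ k ih => rw [Function.iterate_succ_apply, T.root_fix, ih]

lemma onEdges_mono {E E' : Finset (Fin (m + 1))} (hEE : E' ⊆ E) {a : Fin (m + 1)} :
    OnEdges T E' a → OnEdges T E a := fun ⟨e, he, h⟩ => ⟨e, hEE he, h⟩

lemma reachOff_mono {E E' : Finset (Fin (m + 1))} (hEE : E' ⊆ E) {u w : Fin (m + 1)} :
    ReachOff T E u w → ReachOff T E' u w := by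
  intro hr
  refine Relation.ReflTransGen.mono ?_ u w hr
  intro a b h
  exact
    ⟨fun h' => h.1 (onEdges_mono hEE h'), fun h' => h.2.1 (onEdges_mono hEE h'), h.2.2⟩

lemma reachOff_symm {E : Finset (Fin (m + 1))} {u w : Fin (m + 1)}
    (h : ReachOff T E u w) : ReachOff T E w u :=
  @Std.Symm.symm _ _ (@Relation.ReflTransGen.stdSymm _ _
    ⟨fun a b hab => ⟨hab.2.1, hab.1, hab.2.2.symm⟩⟩) _ _ h

/-- Separation: if `x` lies on a cut edge and `a` is a descendant of `x`, then anything
reachable off the edges from `a` is still a descendant of `x`. -/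
lemma desc_of_reach_aux {E : Finset (Fin (m + 1))} {x a b : Fin (m + 1)}
    (hx : OnEdges T E x) (ha : Desc T.p a x) (h : ReachOff T E a b) : Desc T.p b x := by
  induction h with
  | refl => exact ha
  | @tail b c hab hstep ih =>
      obtain ⟨h1, h2, h3⟩ := hstep
      obtain ⟨k, hk⟩ := ih
      rcases h3 with ⟨hne, rfl⟩ | ⟨hne, rfl⟩
      · rcases k with _ | k
        · simp only [Function.iterate_zero_apply] at hk
          exact absurd (hk ▸ hx) h1
        · exact ⟨k, by rw [← Function.iterate_succ_apply]; exact hk⟩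
      · exact ⟨k + 1, by rw [Function.iterate_succ_apply]; exact hk⟩

/-- Anything reachable off the edges from `v`, where the parent of `v` lies on a cut
edge but `v` does not, is a descendant of `v`. -/
lemma desc_of_reach {E : Finset (Fin (m + 1))} {v u : Fin (m + 1)}
    (hpv : OnEdges T E (T.p v)) (hv : ¬ OnEdges T E v)
    (h : ReachOff T E u v) : Desc T.p u v := by
  have h' : ReachOff T E v u := reachOff_symm h
  clear h
  induction h' with
  | refl => exact ⟨0, rfl⟩
  | @tail b c hab hstep ih =>
      obtain ⟨h1, h2, h3⟩ := hstep
      obtain ⟨k, hk⟩ := ih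
      rcases h3 with ⟨hne, rfl⟩ | ⟨hne, rfl⟩
      · rcases k with _ | k
        · simp only [Function.iterate_zero_apply] at hk
          exact absurd (hk ▸ hpv) h2
        · exact ⟨k, by rw [← Function.iterate_succ_apply]; exact hk⟩
      · exact ⟨k + 1, by rw [Function.iterate_succ_apply]; exact hk⟩

lemma not_onEdges_of_mem_verts {c : TCell m n T} {u : Fin (m + 1)} (hu : u ∈ c.verts) :
    ¬ OnEdges T c.edges u := by
  rintro ⟨e, he, h⟩
  obtain ⟨h1, h2⟩ := c.vert_not_on_edge e he u hu
  rcases h with h | h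
  · exact h1 h
  · exact h2 h

/-- Key lemma: in a cell all of whose vertices are blocked, if `v` is a vertex of `T`
whose parent lies on one of the edges, `v` itself does not, and some vertex of the cell
reaches `v` off the edges, then `v` is a vertex of the cell. -/
lemma mem_verts_of_reach {c : TCell m n T} (hb : ∀ x ∈ c.verts, Blocked c x)
    {v : Fin (m + 1)} (hpv : OnEdges T c.edges (T.p v)) (hv : ¬ OnEdges T c.edges v)
    {u : Fin (m + 1)} (hu : u ∈ c.verts) (hr : ReachOff T c.edges u v) : v ∈ c.verts := by
  have key : ∀ N : ℕ, ∀ u : Fin (m + 1), u.val = N → u ∈ c.verts →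
      ReachOff T c.edges u v → v ∈ c.verts := by
    intro N
    induction N using Nat.strong_induction_on with
    | _ N ih =>
      rintro u rfl hu hr
      by_cases huv : u = v
      · exact huv ▸ hu
      · have hdesc : Desc T.p u v := desc_of_reach hpv hv hr
        have hvne : v ≠ 0 := by
          intro h0
          apply hv
          rw [h0] at hpv ⊢
          rwa [T.root_fix] at hpv
        have hune : u ≠ 0 := by
          rintro rfl
          obtain ⟨k, hk⟩ := hdesc
          rw [iter_p_root] at hk
          exact hvne hk.symm
        have hdesc' : Desc T.p (T.p u) v := by
          obtain ⟨k, hk⟩ := hdesc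
          rcases k with _ | k
          · exact absurd hk huv
          · exact ⟨k, by rw [← Function.iterate_succ_apply]; exact hk⟩
        rcases hb u hu with h0 | hpu | he | he
        · exact absurd h0 hune
        · have hstep : ReachOff T c.edges (T.p u) u :=
            Relation.ReflTransGen.single
              ⟨not_onEdges_of_mem_verts hpu, not_onEdges_of_mem_verts hu,
                Or.inr ⟨hune, rfl⟩⟩
          exact ih (T.p u).val (T.parent_lt u hune) (T.p u) rfl hpu (hstep.trans hr)
        · have hon : OnEdges T c.edges (T.p u) := ⟨T.p u, he, Or.inl rfl⟩
          have h1 : Desc T.p v (T.p u) :=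
            desc_of_reach_aux hon ⟨1, by simp⟩ hr
          exact absurd ((le_antisymm (desc_le h1) (desc_le hdesc')) ▸ hon) hv
        · obtain ⟨e, he, hpe⟩ := he
          have hon : OnEdges T c.edges (T.p u) := ⟨e, he, Or.inr hpe.symm⟩
          have h1 : Desc T.p v (T.p u) :=
            desc_of_reach_aux hon ⟨1, by simp⟩ hr
          exact absurd ((le_antisymm (desc_le h1) (desc_le hdesc')) ▸ hon) hv
  exact key u.val u rfl hu hr

lemma tCellEquiv_refl (c : TCell m n T) : TCellEquiv c c := ⟨rfl, fun _ => rfl⟩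

lemma tCellEquiv_symm {a b : TCell m n T} (h : TCellEquiv a b) : TCellEquiv b a :=
  ⟨h.1.symm, fun w => (h.2 w).symm⟩

lemma tCellEquiv_trans {a b c : TCell m n T} (h1 : TCellEquiv a b) (h2 : TCellEquiv b c) :
    TCellEquiv a c := ⟨h1.1.trans h2.1, fun w => (h1.2 w).trans (h2.2 w)⟩

/-- Slide an unblocked vertex `v` of a cell to its parent. -/
def slide (b : TCell m n T) (v : Fin (m + 1)) (hv : v ∈ b.verts)
    (hpvv : T.p v ∉ b.verts) (hpve : T.p v ∉ b.edges)
    (hpvp : ∀ e ∈ b.edges, T.p e ≠ T.p v) : TCell m n T where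
  edges := b.edges
  verts := insert (T.p v) (b.verts.erase v)
  edges_ne_root := b.edges_ne_root
  card_eq := by
    rw [Finset.card_insert_of_notMem (fun h => hpvv (Finset.mem_of_mem_erase h)),
      Finset.card_erase_add_one hv]
    exact b.card_eq
  vert_not_on_edge := by
    intro e he w hw
    rw [Finset.mem_insert] at hw
    rcases hw with rfl | hw
    · exact ⟨fun h => hpve (h ▸ he), fun h => hpvp e he h.symm⟩
    · exact b.vert_not_on_edge e he w (Finset.mem_of_mem_erase hw)
  edges_disjoint := b.edges_disjoint

lemma slide_equiv (b : TCell m n T) (v : Fin (m + 1)) (hv : v ∈ b.verts)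
    (hv0 : v ≠ 0) (hpvv : T.p v ∉ b.verts) (hpve : T.p v ∉ b.edges)
    (hpvp : ∀ e ∈ b.edges, T.p e ≠ T.p v) :
    TCellEquiv b (slide b v hv hpvv hpve hpvp) := by
  have hnon : ¬ OnEdges T b.edges (T.p v) := by
    rintro ⟨e, he, h⟩
    rcases h with h | h
    · exact hpve (h ▸ he)
    · exact hpvp e he h.symm
  have hstep : ReachOff T b.edges v (T.p v) :=
    Relation.ReflTransGen.single
      ⟨not_onEdges_of_mem_verts hv, hnon, Or.inl ⟨hv0, rfl⟩⟩
  refine ⟨rfl, fun w => ?_⟩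
  show (b.verts.filter fun x => ReachOff T b.edges x w).card =
    ((insert (T.p v) (b.verts.erase v)).filter fun x => ReachOff T b.edges x w).card
  have hiff : ReachOff T b.edges v w ↔ ReachOff T b.edges (T.p v) w :=
    ⟨fun h => (reachOff_symm hstep).trans h, fun h => hstep.trans h⟩
  have h1 : b.verts = insert v (b.verts.erase v) := (Finset.insert_erase hv).symm
  conv_lhs => rw [h1]
  rw [Finset.filter_insert, Finset.filter_insert]
  by_cases hP : ReachOff T b.edges (T.p v) w
  · rw [if_pos hP, if_pos (hiff.mpr hP),
      Finset.card_insert_of_notMem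
        (fun h => Finset.notMem_erase v b.verts (Finset.mem_of_mem_filter _ h)),
      Finset.card_insert_of_notMem
        (fun h => (fun h' => hpvv (Finset.mem_of_mem_erase h'))
          (Finset.mem_of_mem_filter _ h))]
  · rw [if_neg (fun h => hP (hiff.mp h)), if_neg hP]

/-- Normalization: every cell is equivalent (with the same edges) to a cell all of whose
vertices are blocked. -/
lemma exists_blocked_equiv (b : TCell m n T) :
    ∃ r : TCell m n T, r.edges = b.edges ∧ TCellEquiv b r ∧ ∀ x ∈ r.verts, Blocked r x := by
  have main : ∀ N : ℕ, ∀ b : TCell m n T, (∑ x ∈ b.verts, x.val) = N →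
      ∃ r : TCell m n T, r.edges = b.edges ∧ TCellEquiv b r ∧
        ∀ x ∈ r.verts, Blocked r x := by
    intro N
    induction N using Nat.strong_induction_on with
    | _ N ih =>
      rintro b rfl
      by_cases hall : ∀ x ∈ b.verts, Blocked b x
      · exact ⟨b, rfl, tCellEquiv_refl b, hall⟩
      · push_neg at hall
        obtain ⟨v, hv, hnb⟩ := hall
        rw [Blocked] at hnb
        push_neg at hnb
        obtain ⟨hv0, hpvv, hpve, hpvp⟩ := hnb
        set b' : TCell m n T := slide b v hv hpvv hpve hpvp with hb'
        have hdec : (∑ x ∈ b'.verts, x.val) < ∑ x ∈ b.verts, x.val := by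
          have hsum : ∑ x ∈ b.verts, x.val = v.val + ∑ x ∈ b.verts.erase v, x.val := by
            conv_lhs => rw [← Finset.insert_erase hv]
            rw [Finset.sum_insert (Finset.notMem_erase v _)]
          have hsum' : ∑ x ∈ b'.verts, x.val
              = (T.p v).val + ∑ x ∈ b.verts.erase v, x.val := by
            show ∑ x ∈ insert (T.p v) (b.verts.erase v), x.val = _
            rw [Finset.sum_insert (fun h => hpvv (Finset.mem_of_mem_erase h))]
          rw [hsum, hsum']
          exact Nat.add_lt_add_right (T.parent_lt v hv0) _
        obtain ⟨r, hrE, hre, hrb⟩ := ih _ hdec b' rfl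
        exact ⟨r, hrE, tCellEquiv_trans (slide_equiv b v hv hv0 hpvv hpve hpvp) hre, hrb⟩
  exact main _ b rfl

end Aux

/-- If `c` is a critical cell of `UD^n(T)` and `[c'] ≤ [c]` in the face-induced partial
order on equivalence classes, then `c'` is equivalent to some critical cell. -/
theorem equiv_critical_of_classLe_critical (m n : ℕ) (T : OrderedTree m)
    (c c' : TCell m n T) (hc : Critical c) (hle : TClassLe c' c) :
    ∃ d : TCell m n T, Critical d ∧ TCellEquiv c' d := by
  obtain ⟨d, d₁, hd, hd₁, hface⟩ := hle
  obtain ⟨r, hrE, hdr, hrb⟩ := exists_blocked_equiv d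
  have hsub : r.edges ⊆ c.edges := by
    rw [hrE, ← hd₁.1]
    exact hface.1
  refine ⟨r, ⟨hrb, ?_⟩, tCellEquiv_trans (tCellEquiv_symm hd) hdr⟩
  intro e he
  obtain ⟨v, hvc, hpv, hlt1, hlt2⟩ := hc.2 e (hsub he)
  -- `v` is not on the edges of `c` (hence not on those of `r`), but its parent is on `e`.
  have hvnotc : ¬ OnEdges T c.edges v := not_onEdges_of_mem_verts hvc
  have hvnot : ¬ OnEdges T r.edges v := fun h => hvnotc (onEdges_mono hsub h)
  have hpvon : OnEdges T r.edges (T.p v) := ⟨e, he, Or.inr hpv⟩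
  -- some vertex of `r` reaches `v` off the edges of `r`
  have hc_card : 0 < (c.verts.filter fun x => ReachOff T c.edges x v).card := by
    refine Finset.card_pos.mpr ⟨v, Finset.mem_filter.mpr ⟨hvc, Relation.ReflTransGen.refl⟩⟩
  have hd₁_card : 0 < (d₁.verts.filter fun x => ReachOff T d₁.edges x v).card := by
    rw [hd₁.2 v]; exact hc_card
  obtain ⟨u₁, hu₁⟩ := Finset.card_pos.mp hd₁_card
  rw [Finset.mem_filter] at hu₁
  have hu₁d : u₁ ∈ d.verts := hface.2.1 hu₁.1
  have hu₁r : ReachOff T d.edges u₁ v := reachOff_mono hface.1 hu₁.2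
  have hd_card : 0 < (d.verts.filter fun x => ReachOff T d.edges x v).card :=
    Finset.card_pos.mpr ⟨u₁, Finset.mem_filter.mpr ⟨hu₁d, hu₁r⟩⟩
  have hr_card : 0 < (r.verts.filter fun x => ReachOff T r.edges x v).card := by
    rw [← hdr.2 v]; exact hd_card
  obtain ⟨u, hu⟩ := Finset.card_pos.mp hr_card
  rw [Finset.mem_filter] at hu
  have hvr : v ∈ r.verts := mem_verts_of_reach hrb hpvon hvnot hu.1 hu.2
  exact ⟨v, hvr, hpv, hlt1, hlt2⟩
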